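/- Let K̂ denote the switching policy (0, 1, 2, …, N−1, S). Then for every switching policy K one has W_q(K̂) ≤ W_q(K), F(K̂) ≥ F(K), and B(K̂) ≤ B(K); that is, K̂ yields the smallest possible expected waiting time and expected back-room staffing and the largest possible expected front-room staffing among all policies. In particular, if B(K̂) ≥ B_l for a given real B_l, then K̂ minimizes W_q over all policies K satisfying B(K) ≥ B_l. -/

import Mathlib

open Finset

/-- A switching policy: `k 0 ≥ 0`, `k i - k (i-1) ≥ 1` for `1 ≤ i ≤ N`, and `k N = S`. -/
def IsPolicy (N : ℕ) (S : ℤ) (k : ℕ → ℤ) : Prop :=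
  0 ≤ k 0 ∧ (∀ i : ℕ, 1 ≤ i → i ≤ N → 1 ≤ k i - k (i - 1)) ∧ k N = S

/-- `X_i = ∏_{g=1}^{i-1} (1/g)^(k_g - k_{g-1})`. -/
noncomputable def Xcoef (k : ℕ → ℤ) (i : ℕ) : ℝ :=
  ∏ g ∈ Finset.Icc 1 (i - 1), ((1 : ℝ) / (g : ℝ)) ^ (k g - k (g - 1))

/-- `β (k 0) = 1` and, for `1 ≤ i ≤ N` and `k (i-1) + 1 ≤ j ≤ k i`,
`β j = (λ/μ)^(j - k 0) * (1/i)^(j - k (i-1)) * X_i`. -/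
def IsBeta (lam mu : ℝ) (N : ℕ) (k : ℕ → ℤ) (β : ℤ → ℝ) : Prop :=
  β (k 0) = 1 ∧
  ∀ i : ℕ, 1 ≤ i → i ≤ N → ∀ j : ℤ, k (i - 1) + 1 ≤ j → j ≤ k i →
    β j = (lam / mu) ^ (j - k 0) * ((1 : ℝ) / (i : ℝ)) ^ (j - k (i - 1)) * Xcoef k i

/-- Steady-state probabilities `P j = β j / Σ_{m=k 0}^{S} β m`. -/
noncomputable def Pfun (S : ℤ) (k : ℕ → ℤ) (β : ℤ → ℝ) (j : ℤ) : ℝ :=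
  β j / ∑ m ∈ Finset.Icc (k 0) S, β m

/-- Expected number of front-room workers. -/
noncomputable def Fval (N : ℕ) (S : ℤ) (k : ℕ → ℤ) (β : ℤ → ℝ) : ℝ :=
  ∑ i ∈ Finset.Icc 1 N, ∑ j ∈ Finset.Icc (k (i - 1) + 1) (k i), (i : ℝ) * Pfun S k β j

/-- Expected number of back-room workers. -/
noncomputable def Bval (N : ℕ) (S : ℤ) (k : ℕ → ℤ) (β : ℤ → ℝ) : ℝ :=
  (N : ℝ) - Fval N S k β

/-- Expected number of customers in the front room. -/
noncomputable def Lval (S : ℤ) (k : ℕ → ℤ) (β : ℤ → ℝ) : ℝ :=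
  ∑ j ∈ Finset.Icc (k 0) S, (j : ℝ) * Pfun S k β j

/-- Expected waiting time `W_q = L / (λ (1 - P S)) - 1/μ`. -/
noncomputable def Wq (lam mu : ℝ) (S : ℤ) (k : ℕ → ℤ) (β : ℤ → ℝ) : ℝ :=
  Lval S k β / (lam * (1 - Pfun S k β S)) - 1 / mu

/-- The policy `K̂ = (0, 1, …, N-1, S)`. -/
def khat (N : ℕ) (S : ℤ) : ℕ → ℤ := fun i => if i = N then S else (i : ℤ)

section Aux
variable {lam mu : ℝ} {N : ℕ} {S : ℤ} {k : ℕ → ℤ} {β : ℤ → ℝ}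

lemma policy_lb (hk : IsPolicy N S k) : ∀ i : ℕ, i ≤ N → k 0 + i ≤ k i := by
  intro i
  induction i with
  | zero => simp
  | succ n ih =>
    intro h
    have h1 := hk.2.1 (n+1) (by omega) h
    simp only [Nat.add_sub_cancel] at h1
    have h2 := ih (by omega)
    push_cast
    omega

lemma policy_mono (hk : IsPolicy N S k) : ∀ a b : ℕ, a ≤ b → b ≤ N → k a ≤ k b := by
  intro a b
  induction b with
  | zero => intro h _; interval_cases a; omega
  | succ n ih =>
    intro hab hbN
    have h1 := hk.2.1 (n+1) (by omega) hbN
    simp only [Nat.add_sub_cancel] at h1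
    rcases Nat.lt_or_ge a (n+1) with h | h
    · have := ih (by omega) (by omega); omega
    · have : a = n+1 := by omega
      subst this; omega

lemma block_exists (hk : IsPolicy N S k) {j : ℤ} (h1 : k 0 + 1 ≤ j) (h2 : j ≤ S) :
    ∃ i : ℕ, 1 ≤ i ∧ i ≤ N ∧ k (i-1) + 1 ≤ j ∧ j ≤ k i := by
  classical
  have hex : ∃ i, j ≤ k i ∧ i ≤ N := ⟨N, by rw [hk.2.2]; exact h2, le_refl N⟩
  have hspec := Nat.find_spec hex
  have h1i : 1 ≤ Nat.find hex := by
    rcases Nat.eq_zero_or_pos (Nat.find hex) with h | h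
    · exfalso; rw [h] at hspec; omega
    · exact h
  refine ⟨Nat.find hex, h1i, hspec.2, ?_, hspec.1⟩
  have hmin := Nat.find_min hex (m := Nat.find hex - 1) (by omega)
  push_neg at hmin
  by_contra hc
  push_neg at hc
  exact absurd (hmin (by omega)) (by omega)

end Aux
section Aux2
variable {lam mu : ℝ} {N : ℕ} {S : ℤ} {k : ℕ → ℤ} {β : ℤ → ℝ}

lemma Xcoef_pos (k : ℕ → ℤ) (i : ℕ) : 0 < Xcoef k i := by
  unfold Xcoef
  apply Finset.prod_pos
  intro g hg
  have : 1 ≤ g := (Finset.mem_Icc.mp hg).1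
  have : (0:ℝ) < (g:ℝ) := by exact_mod_cast Nat.pos_of_ne_zero (by omega)
  exact zpow_pos (by positivity) _

lemma Xcoef_succ (k : ℕ → ℤ) (m : ℕ) :
    Xcoef k (m+2) = Xcoef k (m+1) * ((1:ℝ)/((m+1:ℕ):ℝ)) ^ (k (m+1) - k m) := by
  unfold Xcoef
  have h1 : (m+2) - 1 = (m) + 1 := by omega
  have h2 : (m+1) - 1 = m := by omega
  rw [h1, h2, Finset.prod_Icc_succ_top (by omega : 1 ≤ m + 1)]
  simp

lemma beta_pos (hlam : 0 < lam) (hmu : 0 < mu)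
    (hk : IsPolicy N S k) (hβ : IsBeta lam mu N k β) :
    ∀ j : ℤ, k 0 ≤ j → j ≤ S → 0 < β j := by
  intro j hj1 hj2
  rcases eq_or_lt_of_le hj1 with he | hlt
  · rw [← he, hβ.1]; norm_num
  · obtain ⟨i, h1i, hiN, hb1, hb2⟩ := block_exists hk (by omega) hj2
    rw [hβ.2 i h1i hiN j hb1 hb2]
    have hρ : (0:ℝ) < lam / mu := div_pos hlam hmu
    have hi : (0:ℝ) < (i:ℝ) := by exact_mod_cast Nat.pos_of_ne_zero (by omega)
    have := Xcoef_pos k i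
    positivity

lemma detailed_balance (hlam : 0 < lam) (hmu : 0 < mu)
    (hk : IsPolicy N S k) (hβ : IsBeta lam mu N k β) :
    ∀ i : ℕ, 1 ≤ i → i ≤ N → ∀ j : ℤ, k (i-1) + 1 ≤ j → j ≤ k i →
      (i : ℝ) * β j = (lam / mu) * β (j - 1) := by
  intro i h1i hiN j hj1 hj2
  have hρ : (0:ℝ) < lam / mu := div_pos hlam hmu
  have hρ0 : (lam / mu) ≠ 0 := ne_of_gt hρ
  have hi : (0:ℝ) < (i:ℝ) := by exact_mod_cast Nat.pos_of_ne_zero (by omega)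
  have hii : ((1:ℝ)/(i:ℝ)) ≠ 0 := by positivity
  have hβj := hβ.2 i h1i hiN j hj1 hj2
  rcases eq_or_lt_of_le hj1 with he | hlt
  · -- j = k (i-1) + 1
    have hj1' : j - 1 = k (i-1) := by omega
    rcases Nat.lt_or_ge i 2 with h2 | h2
    · -- i = 1
      have hi1 : i = 1 := by omega
      subst hi1
      simp only [Nat.sub_self] at hj1' he hβj ⊢
      rw [hβj, hj1', hβ.1]
      have : j - k 0 = 1 := by omega
      rw [this]
      unfold Xcoef
      norm_num
    · -- i = m + 2
      obtain ⟨m, rfl⟩ : ∃ m, i = m + 2 := ⟨i - 2, by omega⟩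
      simp only [show m + 2 - 1 = m + 1 from rfl] at hj1 hj1' hβj
      have hgap := hk.2.1 (m+1) (by omega) (by omega)
      simp only [Nat.add_sub_cancel] at hgap
      have hβtop := hβ.2 (m+1) (by omega) (by omega) (k (m+1)) (by simp only [Nat.add_sub_cancel]; omega) le_rfl
      simp only [Nat.add_sub_cancel] at hβtop
      rw [hβj, hj1', hβtop, Xcoef_succ k m]
      have e1 : j - k 0 = (k (m+1) - k 0) + 1 := by omega
      have e2 : j - k (m+1) = 1 := by omega
      rw [e1, e2, zpow_add_one₀ hρ0, zpow_one]
      have him : ((m:ℝ)+2) ≠ 0 := by positivity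
      push_cast
      field_simp
  · -- j - 1 also in block i
    have hβj' := hβ.2 i h1i hiN (j-1) (by omega) (by omega)
    rw [hβj, hβj']
    have e1 : j - k 0 = (j - 1 - k 0) + 1 := by ring
    have e2 : j - k (i-1) = (j - 1 - k (i-1)) + 1 := by ring
    rw [e1, e2, zpow_add_one₀ hρ0, zpow_add_one₀ hii]
    have : (i:ℝ) ≠ 0 := ne_of_gt hi
    field_simp

end Aux2
section Aux3
variable {lam mu : ℝ} {N : ℕ} {S : ℤ} {k : ℕ → ℤ} {β : ℤ → ℝ}

lemma sum_shift (f : ℤ → ℝ) (a b : ℤ) :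
    ∑ j ∈ Finset.Icc (a+1) b, f (j-1) = ∑ j ∈ Finset.Icc a (b-1), f j := by
  apply Finset.sum_bij' (fun j _ => j - 1) (fun j _ => j + 1) <;>
    intro j hj <;> first | rfl | (simp only [Finset.mem_Icc] at *; omega)

lemma icc_ioc (a b : ℤ) : Finset.Icc a b = Finset.Ioc (a-1) b := by
  ext x; simp only [Finset.mem_Icc, Finset.mem_Ioc]; omega

lemma partition_sum (hk : IsPolicy N S k) (f : ℤ → ℝ) :
    ∀ n : ℕ, n ≤ N →
      ∑ i ∈ Finset.Icc 1 n, ∑ j ∈ Finset.Icc (k (i-1)) (k i - 1), f j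
        = ∑ j ∈ Finset.Icc (k 0) (k n - 1), f j := by
  intro n
  induction n with
  | zero => simp
  | succ n ih =>
    intro h
    rw [Finset.sum_Icc_succ_top (by omega : 1 ≤ n + 1), ih (by omega)]
    simp only [Nat.add_sub_cancel]
    rw [icc_ioc (k 0) (k n - 1), icc_ioc (k n) (k (n+1) - 1), icc_ioc (k 0) (k (n+1) - 1)]
    have h1 : k 0 - 1 ≤ k n - 1 := by have := policy_mono hk 0 n (by omega) (by omega); omega
    have h2 : k n - 1 ≤ k (n+1) - 1 := by have := policy_mono hk n (n+1) (by omega) h; omega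
    rw [← Finset.Ioc_union_Ioc_eq_Ioc h1 h2,
      Finset.sum_union (by simp only [Finset.disjoint_left, Finset.mem_Ioc]; omega)]

lemma flow (hlam : 0 < lam) (hmu : 0 < mu)
    (hk : IsPolicy N S k) (hβ : IsBeta lam mu N k β) :
    Fval N S k β = (lam / mu) * (∑ j ∈ Finset.Icc (k 0) (S-1), β j)
      / (∑ m ∈ Finset.Icc (k 0) S, β m) := by
  unfold Fval Pfun
  have step : ∀ i ∈ Finset.Icc 1 N,
      ∑ j ∈ Finset.Icc (k (i-1) + 1) (k i), (i:ℝ) * (β j / ∑ m ∈ Finset.Icc (k 0) S, β m)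
        = (∑ j ∈ Finset.Icc (k (i-1)) (k i - 1), (lam/mu) * β j) / (∑ m ∈ Finset.Icc (k 0) S, β m) := by
    intro i hi
    simp only [Finset.mem_Icc] at hi
    rw [← sum_shift (fun j => (lam/mu) * β j) (k (i-1)) (k i), Finset.sum_div]
    apply Finset.sum_congr rfl
    intro j hj
    simp only [Finset.mem_Icc] at hj
    rw [← detailed_balance hlam hmu hk hβ i hi.1 hi.2 j hj.1 hj.2]
    ring
  have h1 : (∑ i ∈ Finset.Icc 1 N, ∑ j ∈ Finset.Icc (k (i-1) + 1) (k i),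
        (i:ℝ) * (β j / ∑ m ∈ Finset.Icc (k 0) S, β m))
      = ∑ i ∈ Finset.Icc 1 N, (∑ j ∈ Finset.Icc (k (i-1)) (k i - 1), (lam/mu) * β j)
        / (∑ m ∈ Finset.Icc (k 0) S, β m) := Finset.sum_congr rfl step
  rw [h1, ← Finset.sum_div, partition_sum hk (fun j => (lam/mu) * β j) N le_rfl, hk.2.2,
    ← Finset.mul_sum]

end Aux3
section Aux4
variable {lam mu : ℝ} {N : ℕ} {S : ℤ} {k : ℕ → ℤ} {β βh : ℤ → ℝ}

lemma khat_zero (hN : 1 ≤ N) : khat N S 0 = 0 := by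
  unfold khat; rw [if_neg (by omega)]; rfl

lemma khat_policy (hN : 1 ≤ N) (hS : (N:ℤ) ≤ S) : IsPolicy N S (khat N S) := by
  refine ⟨by rw [khat_zero hN], ?_, by unfold khat; rw [if_pos rfl]⟩
  intro i h1 h2
  unfold khat
  split_ifs <;> omega

lemma lr_step (hlam : 0 < lam) (hmu : 0 < mu) (hN : 1 ≤ N) (hS : (N:ℤ) ≤ S)
    (hk : IsPolicy N S k) (hβ : IsBeta lam mu N k β)
    (hβh : IsBeta lam mu N (khat N S) βh) {m : ℤ} (h1 : k 0 + 1 ≤ m) (h2 : m ≤ S) :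
    βh m * β (m-1) ≤ βh (m-1) * β m := by
  have hkh := khat_policy hN hS
  have hk0 : 0 ≤ k 0 := hk.1
  have hkh0 : khat N S 0 = 0 := khat_zero hN
  have hρ : (0:ℝ) < lam / mu := div_pos hlam hmu
  obtain ⟨i, h1i, hiN, hb1, hb2⟩ := block_exists hk h1 h2
  obtain ⟨i', h1i', hiN', hb1', hb2'⟩ := block_exists hkh (by rw [hkh0]; omega) h2
  -- i ≤ i'
  have hlb := policy_lb hk (i-1) (by omega)
  have him : (i:ℤ) ≤ m := by omega
  have hii' : i ≤ i' := by
    rcases eq_or_lt_of_le hiN' with he | hlt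
    · omega
    · have : khat N S i' = (i':ℤ) := by unfold khat; rw [if_neg (by omega)]
      rw [this] at hb2'
      omega
  have hdb := detailed_balance hlam hmu hk hβ i h1i hiN m hb1 hb2
  have hdb' := detailed_balance hlam hmu hkh hβh i' h1i' hiN' m hb1' hb2'
  have hβm : 0 < β m := beta_pos hlam hmu hk hβ m (by omega) h2
  have hβhm : 0 < βh m := beta_pos hlam hmu hkh hβh m (by rw [hkh0]; omega) h2
  have key : (i:ℝ) * (βh m * β m) ≤ (i':ℝ) * (βh m * β m) := by
    apply mul_le_mul_of_nonneg_right (by exact_mod_cast hii') (by positivity)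
  have e1 : (lam/mu) * (βh m * β (m-1)) = (i:ℝ) * (βh m * β m) := by
    linear_combination (-βh m) * hdb
  have e2 : (lam/mu) * (βh (m-1) * β m) = (i':ℝ) * (βh m * β m) := by
    linear_combination (-β m) * hdb'
  have : (lam/mu) * (βh m * β (m-1)) ≤ (lam/mu) * (βh (m-1) * β m) := by
    rw [e1, e2]; exact key
  exact le_of_mul_le_mul_left this hρ

lemma lr (hlam : 0 < lam) (hmu : 0 < mu) (hN : 1 ≤ N) (hS : (N:ℤ) ≤ S)
    (hk : IsPolicy N S k) (hβ : IsBeta lam mu N k β)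
    (hβh : IsBeta lam mu N (khat N S) βh) {j m : ℤ} (hj : k 0 ≤ j) (hjm : j ≤ m)
    (hm : m ≤ S) : βh m * β j ≤ βh j * β m := by
  have hkh := khat_policy hN hS
  have hk0 : 0 ≤ k 0 := hk.1
  have hkh0 : khat N S 0 = 0 := khat_zero hN
  have hjS : j ≤ S := le_trans hjm hm
  have H := Int.le_induction (motive := fun n _ => n ≤ S → βh n * β j ≤ βh j * β n)
    (fun _ => le_rfl) ?_ m hjm
  · exact H hm
  · intro n hn ih hnS
    have h1 := ih (by omega)
    have hstep := lr_step hlam hmu hN hS hk hβ hβh (m := n+1) (by omega) hnS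
    simp only [add_sub_cancel_right] at hstep
    have han : 0 < βh n := beta_pos hlam hmu hkh hβh n (by omega) (by omega)
    have hbn : 0 < β n := beta_pos hlam hmu hk hβ n (by omega) (by omega)
    have haj : 0 < βh j := beta_pos hlam hmu hkh hβh j (by omega) hjS
    have hbj : 0 < β j := beta_pos hlam hmu hk hβ j (by omega) hjS
    have han1 : 0 < βh (n+1) := beta_pos hlam hmu hkh hβh (n+1) (by omega) hnS
    have hbn1 : 0 < β (n+1) := beta_pos hlam hmu hk hβ (n+1) (by omega) hnS
    have m1 : βh (n+1) * (βh n * β j) ≤ βh (n+1) * (βh j * β n) :=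
      mul_le_mul_of_nonneg_left h1 han1.le
    have m2 : βh j * (βh (n+1) * β n) ≤ βh j * (βh n * β (n+1)) :=
      mul_le_mul_of_nonneg_left hstep haj.le
    have : βh n * (βh (n+1) * β j) ≤ βh n * (βh j * β (n+1)) := by nlinarith
    exact le_of_mul_le_mul_left this han

end Aux4
section Aux5
variable {lam mu : ℝ} {N : ℕ} {S : ℤ} {k : ℕ → ℤ} {β βh : ℤ → ℝ}

lemma sum_beta_pos (hlam : 0 < lam) (hmu : 0 < mu)
    (hk : IsPolicy N S k) (hβ : IsBeta lam mu N k β) :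
    0 < ∑ m ∈ Finset.Icc (k 0) S, β m := by
  have hk0S : k 0 ≤ S := by
    have := policy_lb hk N le_rfl; rw [hk.2.2] at this; omega
  apply Finset.sum_pos
  · intro m hm; simp only [Finset.mem_Icc] at hm; exact beta_pos hlam hmu hk hβ m hm.1 hm.2
  · exact ⟨k 0, Finset.mem_Icc.mpr ⟨le_rfl, hk0S⟩⟩

lemma sum_split_top (f : ℤ → ℝ) {a b : ℤ} (h : a ≤ b) :
    ∑ j ∈ Finset.Icc a b, f j = (∑ j ∈ Finset.Icc a (b-1), f j) + f b := by
  rw [icc_ioc a b, icc_ioc a (b-1),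
    ← Finset.Ioc_union_Ioc_eq_Ioc (by omega : a - 1 ≤ b - 1) (by omega : b - 1 ≤ b),
    Finset.sum_union (by simp only [Finset.disjoint_left, Finset.mem_Ioc]; omega),
    show Finset.Ioc (b-1) b = {b} by ext x; simp only [Finset.mem_Ioc, Finset.mem_singleton]; omega,
    Finset.sum_singleton]

lemma one_sub_PS (hlam : 0 < lam) (hmu : 0 < mu) (hN : 1 ≤ N)
    (hk : IsPolicy N S k) (hβ : IsBeta lam mu N k β) :
    1 - Pfun S k β S = (∑ j ∈ Finset.Icc (k 0) (S-1), β j) / (∑ m ∈ Finset.Icc (k 0) S, β m)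
      ∧ 0 < 1 - Pfun S k β S := by
  have hk0S : k 0 + 1 ≤ S := by
    have := policy_lb hk N le_rfl; rw [hk.2.2] at this
    have : (1:ℤ) ≤ (N:ℤ) := by exact_mod_cast hN
    omega
  have hD : 0 < ∑ m ∈ Finset.Icc (k 0) S, β m := sum_beta_pos hlam hmu hk hβ
  have hsplit := sum_split_top β (by omega : k 0 ≤ S)
  have hT : 0 < ∑ j ∈ Finset.Icc (k 0) (S-1), β j := by
    apply Finset.sum_pos
    · intro m hm; simp only [Finset.mem_Icc] at hm
      exact beta_pos hlam hmu hk hβ m hm.1 (by omega)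
    · exact ⟨k 0, Finset.mem_Icc.mpr ⟨le_rfl, by omega⟩⟩
  have he : 1 - Pfun S k β S
      = (∑ j ∈ Finset.Icc (k 0) (S-1), β j) / (∑ m ∈ Finset.Icc (k 0) S, β m) := by
    unfold Pfun
    rw [eq_div_iff (ne_of_gt hD), sub_mul, one_mul, div_mul_cancel₀ _ (ne_of_gt hD), hsplit]
    ring
  exact ⟨he, by rw [he]; positivity⟩

lemma F_eq (hlam : 0 < lam) (hmu : 0 < mu) (hN : 1 ≤ N)
    (hk : IsPolicy N S k) (hβ : IsBeta lam mu N k β) :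
    Fval N S k β = (lam / mu) * (1 - Pfun S k β S) := by
  rw [flow hlam hmu hk hβ, (one_sub_PS hlam hmu hN hk hβ).1, mul_div_assoc]

lemma PS_le (hlam : 0 < lam) (hmu : 0 < mu) (hN : 1 ≤ N) (hS : (N:ℤ) ≤ S)
    (hk : IsPolicy N S k) (hβ : IsBeta lam mu N k β)
    (hβh : IsBeta lam mu N (khat N S) βh) :
    Pfun S (khat N S) βh S ≤ Pfun S k β S := by
  have hkh := khat_policy hN hS
  have hkh0 : khat N S 0 = 0 := khat_zero hN
  have hk0 : 0 ≤ k 0 := hk.1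
  have hk0S : k 0 ≤ S := by
    have := policy_lb hk N le_rfl; rw [hk.2.2] at this; omega
  have hDk : 0 < ∑ m ∈ Finset.Icc (k 0) S, β m := sum_beta_pos hlam hmu hk hβ
  have hDh : 0 < ∑ m ∈ Finset.Icc (khat N S 0) S, βh m := sum_beta_pos hlam hmu hkh hβh
  have hβS : 0 < β S := beta_pos hlam hmu hk hβ S hk0S le_rfl
  unfold Pfun
  rw [div_le_div_iff₀ hDh hDk, Finset.mul_sum, Finset.mul_sum]
  calc ∑ m ∈ Finset.Icc (k 0) S, βh S * β m
      ≤ ∑ m ∈ Finset.Icc (k 0) S, β S * βh m := by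
        apply Finset.sum_le_sum
        intro m hm
        simp only [Finset.mem_Icc] at hm
        have := lr hlam hmu hN hS hk hβ hβh hm.1 hm.2 le_rfl
        linarith
    _ ≤ ∑ m ∈ Finset.Icc (khat N S 0) S, β S * βh m := by
        apply Finset.sum_le_sum_of_subset_of_nonneg
        · intro x hx; simp only [Finset.mem_Icc] at *; omega
        · intro m hm hnm
          simp only [Finset.mem_Icc] at hm
          have := beta_pos hlam hmu hkh hβh m hm.1 hm.2
          positivity

lemma L_le (hlam : 0 < lam) (hmu : 0 < mu) (hN : 1 ≤ N) (hS : (N:ℤ) ≤ S)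
    (hk : IsPolicy N S k) (hβ : IsBeta lam mu N k β)
    (hβh : IsBeta lam mu N (khat N S) βh) :
    Lval S (khat N S) βh ≤ Lval S k β := by
  have hkh := khat_policy hN hS
  have hkh0 : khat N S 0 = 0 := khat_zero hN
  have hk0 : 0 ≤ k 0 := hk.1
  have hk0S : k 0 ≤ S := by
    have := policy_lb hk N le_rfl; rw [hk.2.2] at this; omega
  have hDk : 0 < ∑ m ∈ Finset.Icc (k 0) S, β m := sum_beta_pos hlam hmu hk hβ
  have hDh : 0 < ∑ m ∈ Finset.Icc (khat N S 0) S, βh m := sum_beta_pos hlam hmu hkh hβh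
  rw [hkh0] at hDh
  unfold Lval Pfun
  rw [hkh0]
  simp only [← mul_div_assoc]
  rw [← Finset.sum_div, ← Finset.sum_div, div_le_div_iff₀ hDh hDk]
  have h : 0 ≤ ∑ m ∈ Finset.Icc (k 0) S, ∑ j ∈ Finset.Icc (0:ℤ) S,
      ((m:ℝ) - (j:ℝ)) * (βh j * β m) := by
    have hsplit : Finset.Icc (0:ℤ) S = Finset.Icc 0 (k 0 - 1) ∪ Finset.Icc (k 0) S := by
      ext x; simp only [Finset.mem_union, Finset.mem_Icc]; omega
    have hdisj : Disjoint (Finset.Icc (0:ℤ) (k 0 - 1)) (Finset.Icc (k 0) S) := by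
      simp only [Finset.disjoint_left, Finset.mem_Icc]; omega
    have inner : ∀ m ∈ Finset.Icc (k 0) S,
        ∑ j ∈ Finset.Icc (0:ℤ) S, ((m:ℝ) - (j:ℝ)) * (βh j * β m)
          = (∑ j ∈ Finset.Icc (0:ℤ) (k 0 - 1), ((m:ℝ) - (j:ℝ)) * (βh j * β m))
            + ∑ j ∈ Finset.Icc (k 0) S, ((m:ℝ) - (j:ℝ)) * (βh j * β m) := by
      intro m _
      rw [hsplit, Finset.sum_union hdisj]
    rw [Finset.sum_congr rfl inner, Finset.sum_add_distrib]
    have part1 : 0 ≤ ∑ m ∈ Finset.Icc (k 0) S,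
        ∑ j ∈ Finset.Icc (0:ℤ) (k 0 - 1), ((m:ℝ) - (j:ℝ)) * (βh j * β m) := by
      apply Finset.sum_nonneg
      intro m hm
      apply Finset.sum_nonneg
      intro j hj
      simp only [Finset.mem_Icc] at hm hj
      have h1 : 0 ≤ βh j := (beta_pos hlam hmu hkh hβh j (by rw [hkh0]; omega) (by omega)).le
      have h2 : 0 ≤ β m := (beta_pos hlam hmu hk hβ m hm.1 hm.2).le
      have h3 : (0:ℝ) ≤ (m:ℝ) - (j:ℝ) := by
        rw [sub_nonneg]; exact_mod_cast le_trans (by omega : j ≤ k 0) hm.1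
      positivity
    have part2 : 0 ≤ ∑ m ∈ Finset.Icc (k 0) S,
        ∑ j ∈ Finset.Icc (k 0) S, ((m:ℝ) - (j:ℝ)) * (βh j * β m) := by
      have hswap : ∑ m ∈ Finset.Icc (k 0) S, ∑ j ∈ Finset.Icc (k 0) S,
          ((j:ℝ) - (m:ℝ)) * (βh m * β j)
            = ∑ m ∈ Finset.Icc (k 0) S, ∑ j ∈ Finset.Icc (k 0) S,
          ((m:ℝ) - (j:ℝ)) * (βh j * β m) := Finset.sum_comm
      have hsum : 0 ≤ ∑ m ∈ Finset.Icc (k 0) S, ∑ j ∈ Finset.Icc (k 0) S,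
          (((m:ℝ) - (j:ℝ)) * (βh j * β m) + ((j:ℝ) - (m:ℝ)) * (βh m * β j)) := by
        apply Finset.sum_nonneg
        intro m hm
        apply Finset.sum_nonneg
        intro j hj
        simp only [Finset.mem_Icc] at hm hj
        rcases le_total j m with hjm | hmj
        · have hlr := lr hlam hmu hN hS hk hβ hβh hj.1 hjm hm.2
          have : (0:ℝ) ≤ (m:ℝ) - (j:ℝ) := by rw [sub_nonneg]; exact_mod_cast hjm
          nlinarith
        · have hlr := lr hlam hmu hN hS hk hβ hβh hm.1 hmj hj.2
          have : (0:ℝ) ≤ (j:ℝ) - (m:ℝ) := by rw [sub_nonneg]; exact_mod_cast hmj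
          nlinarith
      rw [Finset.sum_congr rfl (fun m _ => Finset.sum_add_distrib), Finset.sum_add_distrib,
        hswap] at hsum
      linarith
    linarith
  have expand : ∑ m ∈ Finset.Icc (k 0) S, ∑ j ∈ Finset.Icc (0:ℤ) S,
      ((m:ℝ) - (j:ℝ)) * (βh j * β m)
        = (∑ m ∈ Finset.Icc (k 0) S, (m:ℝ) * β m) * (∑ j ∈ Finset.Icc (0:ℤ) S, βh j)
          - (∑ j ∈ Finset.Icc (0:ℤ) S, (j:ℝ) * βh j) * (∑ m ∈ Finset.Icc (k 0) S, β m) := by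
    rw [Finset.sum_mul_sum, Finset.sum_mul_sum,
      Finset.sum_comm (s := Finset.Icc (0:ℤ) S) (t := Finset.Icc (k 0) S),
      ← Finset.sum_sub_distrib]
    apply Finset.sum_congr rfl
    intro m _
    rw [← Finset.sum_sub_distrib]
    apply Finset.sum_congr rfl
    intro j _
    ring
  linarith [expand ▸ h]

end Aux5


/-- `K̂` yields the smallest expected waiting time and back-room staffing and
the largest front-room staffing over all policies; in particular if it is
feasible (`B(K̂) ≥ B_l`) then it is optimal for the constrained problem. -/
theorem khat_optimal
    (lam mu : ℝ) (hlam : 0 < lam) (hmu : 0 < mu)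
    (N : ℕ) (hN : 1 ≤ N) (S : ℤ) (hS : (N : ℤ) ≤ S)
    (βh : ℤ → ℝ) (hβh : IsBeta lam mu N (khat N S) βh) (Bl : ℝ) :
    (∀ (k : ℕ → ℤ) (β : ℤ → ℝ), IsPolicy N S k → IsBeta lam mu N k β →
      Wq lam mu S (khat N S) βh ≤ Wq lam mu S k β ∧
      Fval N S k β ≤ Fval N S (khat N S) βh ∧
      Bval N S (khat N S) βh ≤ Bval N S k β) ∧
    (Bl ≤ Bval N S (khat N S) βh →
      ∀ (k : ℕ → ℤ) (β : ℤ → ℝ), IsPolicy N S k → IsBeta lam mu N k β →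
        Bl ≤ Bval N S k β →
        Wq lam mu S (khat N S) βh ≤ Wq lam mu S k β) := by
  have hkh := khat_policy hN hS
  have main : ∀ (k : ℕ → ℤ) (β : ℤ → ℝ), IsPolicy N S k → IsBeta lam mu N k β →
      Wq lam mu S (khat N S) βh ≤ Wq lam mu S k β ∧
      Fval N S k β ≤ Fval N S (khat N S) βh ∧
      Bval N S (khat N S) βh ≤ Bval N S k β := by
    intro k β hk hβ
    have hρ : (0:ℝ) < lam / mu := div_pos hlam hmu
    have hPS := PS_le hlam hmu hN hS hk hβ hβh
    have hL := L_le hlam hmu hN hS hk hβ hβh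
    have hFk := F_eq hlam hmu hN hk hβ
    have hFh := F_eq hlam hmu hN hkh hβh
    have hposk := (one_sub_PS hlam hmu hN hk hβ).2
    have hposh := (one_sub_PS hlam hmu hN hkh hβh).2
    have hF : Fval N S k β ≤ Fval N S (khat N S) βh := by
      rw [hFk, hFh]
      apply mul_le_mul_of_nonneg_left (by linarith) hρ.le
    refine ⟨?_, hF, by unfold Bval; linarith⟩
    -- Wq comparison
    have hLk0 : 0 ≤ Lval S k β := by
      unfold Lval Pfun
      apply Finset.sum_nonneg
      intro j hj
      simp only [Finset.mem_Icc] at hj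
      have h1 : 0 ≤ β j := (beta_pos hlam hmu hk hβ j hj.1 hj.2).le
      have h2 : 0 ≤ ∑ m ∈ Finset.Icc (k 0) S, β m := (sum_beta_pos hlam hmu hk hβ).le
      have h3 : (0:ℝ) ≤ (j:ℝ) := by exact_mod_cast le_trans hk.1 hj.1
      positivity
    unfold Wq
    apply sub_le_sub_right
    apply div_le_div₀ hLk0 hL (by positivity)
    apply mul_le_mul_of_nonneg_left (by linarith) hlam.le
  exact ⟨main, fun _ k β hk hβ _ => (main k β hk hβ).1⟩
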